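/- arXiv:1508.00705 — 5 statements merged into one kernel-verified Lean document; each statement's English description precedes it below -/
import Mathlib

section
/- Let V be a finite-dimensional real vector space, B a nondegenerate symmetric bilinear form on V, ω an alternating (skew-symmetric) bilinear form on V, and u ∈ V a fixed vector. Then there exists a unique linear map A : V → End(V) such that for every v ∈ V the endomorphism A(v) is skew-adjoint with respect to B, and A(v)(w) − A(w)(v) = ω(v, w) • u for all v, w ∈ V. -/
/-- Existence and uniqueness of the solution of the prolongation
equation `A v w - A w v = ω v w • u` among maps with values in `B`-skew-adjoint
endomorphisms, for a nondegenerate symmetric bilinear form `B`, an alternating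
bilinear form `ω`, and a fixed vector `u` on a finite-dimensional real vector space. -/
theorem existsUnique_skew_adjoint_prolongation
    (V : Type*) [AddCommGroup V] [Module ℝ V] [FiniteDimensional ℝ V]
    (B : V →ₗ[ℝ] V →ₗ[ℝ] ℝ)
    (hB_symm : ∀ v w : V, B v w = B w v)
    (hB_nondeg : ∀ v : V, (∀ w : V, B v w = 0) → v = 0)
    (ω : V →ₗ[ℝ] V →ₗ[ℝ] ℝ)
    (hω_alt : ∀ v : V, ω v v = 0)
    (u : V) :
    ∃! A : V →ₗ[ℝ] Module.End ℝ V,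
      (∀ v w x : V, B (A v w) x + B w (A v x) = 0) ∧
      (∀ v w : V, A v w - A w v = ω v w • u) := by
  have hω_skew : ∀ v w : V, ω w v = -ω v w := by
    intro v w
    have h := hω_alt (v + w)
    simp only [map_add, LinearMap.add_apply] at h
    have h1 := hω_alt v
    have h2 := hω_alt w
    linarith
  have hnd : (LinearMap.BilinForm.Nondegenerate B) :=
    ⟨hB_nondeg, fun y hy => hB_nondeg y (fun x => (hB_symm y x).trans (hy x))⟩
  -- the trilinear map giving B (A v w) x
  set g : V →ₗ[ℝ] V →ₗ[ℝ] Module.Dual ℝ V :=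
    LinearMap.mk₂ ℝ
      (fun v w => (1/2 : ℝ) • (ω v w • B u - B u w • ω v - B u v • ω w))
      (by intro v v' w; ext x; simp; ring)
      (by intro c v w; ext x; simp; ring)
      (by intro v w w'; ext x; simp; ring)
      (by intro c v w; ext x; simp; ring) with hg_def
  have hg_apply : ∀ v w x : V, g v w x
      = (1/2 : ℝ) * (ω v w * B u x - B u w * ω v x - B u v * ω w x) := by
    intro v w x
    simp only [hg_def, LinearMap.mk₂_apply, LinearMap.smul_apply, LinearMap.sub_apply,
      smul_eq_mul]
    try ring
  set A : V →ₗ[ℝ] Module.End ℝ V :=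
    g.compr₂ ((LinearMap.BilinForm.toDual B hnd).symm : Module.Dual ℝ V →ₗ[ℝ] V)
    with hA_def
  have hBA : ∀ v w x : V, B (A v w) x
      = (1/2 : ℝ) * (ω v w * B u x - B u w * ω v x - B u v * ω w x) := by
    intro v w x
    have : B (A v w) x = g v w x := by
      simp only [hA_def, LinearMap.compr₂_apply, LinearEquiv.coe_coe]
      exact LinearMap.BilinForm.apply_toDual_symm_apply (f := g v w) (v := x)
    rw [this, hg_apply]
  refine ⟨A, ⟨?_, ?_⟩, ?_⟩
  · intro v w x
    rw [hB_symm w (A v x), hBA, hBA]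
    have h1 := hω_skew v w
    have h2 := hω_skew v x
    have h3 := hω_skew w x
    have h4 := hB_symm u w
    ring_nf
    rw [hω_skew w x]
    ring
  · intro v w
    have hz : ∀ x, B (A v w - A w v - ω v w • u) x = 0 := by
      intro x
      simp only [map_sub, LinearMap.sub_apply, map_smul, LinearMap.smul_apply,
        smul_eq_mul]
      rw [hBA, hBA]
      have h1 := hω_skew v w
      have h2 := hω_skew v x
      rw [hω_skew w v]
      ring
    have h0 := hB_nondeg _ hz
    rw [sub_eq_zero] at h0
    exact h0
  · intro A' ⟨hskew, heq⟩
    -- show A' = A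
    have key : ∀ v w x : V, B (A' v w) x = B (A v w) x := by
      intro v w x
      have hs : ∀ a b c : V, B (A' a b) c = -B (A' a c) b := by
        intro a b c
        have := hskew a b c
        rw [hB_symm b (A' a c)] at this
        linarith
      have he : ∀ a b c : V, B (A' a b) c - B (A' b a) c = ω a b * B u c := by
        intro a b c
        have := congrArg (fun z => B z c) (heq a b)
        simpa [map_sub, smul_eq_mul] using this
      have e1 := he v w x
      have e2 := hs w v x
      have e3 := he w x v
      have e4 := hs x w v
      have e5 := he x v w
      have e6 := hs v x w
      rw [hBA]
      rw [hω_skew v x] at e5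
      linarith [e1, e2, e3, e4, e5, e6]
    ext v w
    have hz : ∀ x, B (A' v w - A v w) x = 0 := by
      intro x
      have hk := key v w x
      simp only [map_sub, LinearMap.sub_apply]
      linarith
    exact sub_eq_zero.mp (hB_nondeg _ hz)
end

section
/- Fix n ≥ 1 and sign sequences ε, δ : {1,…,n} → {−1, 1}. Let D ∈ M_{2n}(ℝ) be the diagonal matrix diag(ε_1, …, ε_n, δ_1, …, δ_n) and let Ω ∈ M_{2n}(ℝ) be the standard symplectic matrix. Consider the real linear subspace 𝔤 = {A ∈ M_{2n}(ℝ) : AᵀD + DA = 0 and AᵀΩ + ΩA = 0} of 2n×2n real matrices (the Lie algebra of O(D) ∩ Sp(Ω)). If s is the number of indices i ∈ {1,…,n} with ε_i = δ_i and t = n − s, then the dimension of 𝔤 over ℝ equals s² + t². -/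
open Matrix

/-- The Lie algebra of `O(D) ∩ Sp(Ω)`: matrices that are simultaneously infinitesimally
orthogonal for the symmetric form with Gram matrix `D` and infinitesimally symplectic
for the skew form with Gram matrix `Ω`, as a linear subspace of matrices. -/
def pairAlgebra {m : Type*} [Fintype m] (D Ω : Matrix m m ℝ) :
    Submodule ℝ (Matrix m m ℝ) where
  carrier := {A | Aᵀ * D + D * A = 0 ∧ Aᵀ * Ω + Ω * A = 0}
  add_mem' := by
    rintro a b ⟨ha1, ha2⟩ ⟨hb1, hb2⟩
    constructor
    · have h : (a + b)ᵀ * D + D * (a + b) = (aᵀ * D + D * a) + (bᵀ * D + D * b) := by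
        rw [Matrix.transpose_add, Matrix.add_mul, Matrix.mul_add]; abel
      rw [h, ha1, hb1, add_zero]
    · have h : (a + b)ᵀ * Ω + Ω * (a + b) = (aᵀ * Ω + Ω * a) + (bᵀ * Ω + Ω * b) := by
        rw [Matrix.transpose_add, Matrix.add_mul, Matrix.mul_add]; abel
      rw [h, ha2, hb2, add_zero]
  zero_mem' := by
    constructor <;> simp
  smul_mem' := by
    rintro c a ⟨ha1, ha2⟩
    constructor
    · have h : (c • a)ᵀ * D + D * (c • a) = c • (aᵀ * D + D * a) := by
        rw [Matrix.transpose_smul, Matrix.smul_mul, Matrix.mul_smul, smul_add]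
      rw [h, ha1, smul_zero]
    · have h : (c • a)ᵀ * Ω + Ω * (c • a) = c • (aᵀ * Ω + Ω * a) := by
        rw [Matrix.transpose_smul, Matrix.smul_mul, Matrix.mul_smul, smul_add]
      rw [h, ha2, smul_zero]

namespace PairAux

open Sum

variable {n : ℕ} (ε δ : Fin n → ℝ)

def aF (g : Fin n × Fin n → ℝ) (i j : Fin n) : ℝ :=
  if i < j then g (i, j) else if j < i then -(ε i * ε j * g (j, i)) else 0

def bF (g : Fin n × Fin n → ℝ) (i j : Fin n) : ℝ :=
  if j ≤ i then g (i, j) else g (j, i)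

lemma bF_symm (g : Fin n × Fin n → ℝ) (i j : Fin n) : bF g i j = bF g j i := by
  unfold bF
  rcases lt_trichotomy i j with h | h | h
  · rw [if_neg (by simpa using h), if_pos h.le]
  · subst h; rfl
  · rw [if_pos h.le, if_neg (by simpa using h)]

def mk (g : Fin n × Fin n → ℝ) : Matrix (Fin n ⊕ Fin n) (Fin n ⊕ Fin n) ℝ :=
  Matrix.of fun x y => match x, y with
  | inl i, inl j => aF ε g i j
  | inl i, inr j => bF g i j
  | inr i, inl j => -(δ i * ε j * bF g i j)
  | inr i, inr j => -(aF ε g j i)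

@[simp] lemma mk_ll (g : Fin n × Fin n → ℝ) (i j : Fin n) :
    mk ε δ g (inl i) (inl j) = aF ε g i j := rfl
@[simp] lemma mk_lr (g : Fin n × Fin n → ℝ) (i j : Fin n) :
    mk ε δ g (inl i) (inr j) = bF g i j := rfl
@[simp] lemma mk_rl (g : Fin n × Fin n → ℝ) (i j : Fin n) :
    mk ε δ g (inr i) (inl j) = -(δ i * ε j * bF g i j) := rfl
@[simp] lemma mk_rr (g : Fin n × Fin n → ℝ) (i j : Fin n) :
    mk ε δ g (inr i) (inr j) = -(aF ε g j i) := rfl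

def ph (A : Matrix (Fin n ⊕ Fin n) (Fin n ⊕ Fin n) ℝ) (p : Fin n × Fin n) : ℝ :=
  if p.1 < p.2 then A (inl p.1) (inl p.2) else A (inl p.1) (inr p.2)

lemma mem_iff (A : Matrix (Fin n ⊕ Fin n) (Fin n ⊕ Fin n) ℝ) :
    A ∈ pairAlgebra (Matrix.diagonal (Sum.elim ε δ))
        (Matrix.fromBlocks 0 (-1) 1 0 : Matrix (Fin n ⊕ Fin n) (Fin n ⊕ Fin n) ℝ) ↔
      ((∀ x y, A y x * Sum.elim ε δ y + Sum.elim ε δ x * A x y = 0) ∧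
       (∀ i j, A (inr j) (inl i) = A (inr i) (inl j)) ∧
       (∀ i j, A (inr i) (inr j) = -A (inl j) (inl i)) ∧
       (∀ i j, A (inl i) (inr j) = A (inl j) (inr i))) := by
  have hmem : A ∈ pairAlgebra (Matrix.diagonal (Sum.elim ε δ))
        (Matrix.fromBlocks 0 (-1) 1 0 : Matrix (Fin n ⊕ Fin n) (Fin n ⊕ Fin n) ℝ) ↔
      (Aᵀ * Matrix.diagonal (Sum.elim ε δ) + Matrix.diagonal (Sum.elim ε δ) * A = 0 ∧
       Aᵀ * Matrix.fromBlocks 0 (-1) 1 0 + Matrix.fromBlocks 0 (-1) 1 0 * A = 0) := Iff.rfl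
  rw [hmem]
  have e1 : (Aᵀ * Matrix.diagonal (Sum.elim ε δ) + Matrix.diagonal (Sum.elim ε δ) * A = 0) ↔
      (∀ x y, A y x * Sum.elim ε δ y + Sum.elim ε δ x * A x y = 0) := by
    rw [← Matrix.ext_iff]
    apply forall_congr'; intro x; apply forall_congr'; intro y
    simp [Matrix.mul_diagonal, Matrix.diagonal_mul]
  have hΩ1 : ∀ (x : Fin n ⊕ Fin n) (j : Fin n),
      (Aᵀ * (Matrix.fromBlocks 0 (-1) 1 0 : Matrix (Fin n ⊕ Fin n) (Fin n ⊕ Fin n) ℝ)) x (inl j)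
        = A (inr j) x := by
    intro x j
    simp [Matrix.mul_apply, Fintype.sum_sum_type, Matrix.one_apply, mul_ite]
  have hΩ2 : ∀ (x : Fin n ⊕ Fin n) (j : Fin n),
      (Aᵀ * (Matrix.fromBlocks 0 (-1) 1 0 : Matrix (Fin n ⊕ Fin n) (Fin n ⊕ Fin n) ℝ)) x (inr j)
        = -A (inl j) x := by
    intro x j
    simp [Matrix.mul_apply, Fintype.sum_sum_type, Matrix.one_apply, mul_ite]
  have hΩ3 : ∀ (i : Fin n) (y : Fin n ⊕ Fin n),
      ((Matrix.fromBlocks 0 (-1) 1 0 : Matrix (Fin n ⊕ Fin n) (Fin n ⊕ Fin n) ℝ) * A) (inl i) y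
        = -A (inr i) y := by
    intro i y
    simp [Matrix.mul_apply, Fintype.sum_sum_type, Matrix.one_apply, ite_mul]
  have hΩ4 : ∀ (i : Fin n) (y : Fin n ⊕ Fin n),
      ((Matrix.fromBlocks 0 (-1) 1 0 : Matrix (Fin n ⊕ Fin n) (Fin n ⊕ Fin n) ℝ) * A) (inr i) y
        = A (inl i) y := by
    intro i y
    simp [Matrix.mul_apply, Fintype.sum_sum_type, Matrix.one_apply, ite_mul]
  have e2 : (Aᵀ * Matrix.fromBlocks 0 (-1) 1 0 + Matrix.fromBlocks 0 (-1) 1 0 * A = 0) ↔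
      ((∀ i j, A (inr j) (inl i) = A (inr i) (inl j)) ∧
       (∀ i j, A (inr i) (inr j) = -A (inl j) (inl i)) ∧
       (∀ i j, A (inl i) (inr j) = A (inl j) (inr i))) := by
    rw [← Matrix.ext_iff]
    constructor
    · intro h
      refine ⟨fun i j => ?_, fun i j => ?_, fun i j => ?_⟩
      · have := h (inl i) (inl j)
        rw [Matrix.add_apply, hΩ1, hΩ3] at this
        simp at this; linarith
      · have := h (inr j) (inl i)
        rw [Matrix.add_apply, hΩ1, hΩ4] at this
        simp at this; linarith
      · have := h (inr i) (inr j)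
        rw [Matrix.add_apply, hΩ2, hΩ4] at this
        simp at this; linarith
    · rintro ⟨h1, h2, h3⟩ x y
      rcases x with i | i <;> rcases y with j | j
      · rw [Matrix.add_apply, hΩ1, hΩ3]; simp [h1 i j]
      · rw [Matrix.add_apply, hΩ2, hΩ3]; simp [h2 i j]
      · rw [Matrix.add_apply, hΩ1, hΩ4]
        have := h2 j i
        simp; linarith
      · rw [Matrix.add_apply, hΩ2, hΩ4]
        have := h3 i j
        simp; linarith
  rw [e1, e2]


lemma sq_one {a : ℝ} (h : a = 1 ∨ a = -1) : a * a = 1 := by rcases h with h | h <;> rw [h] <;> norm_num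

lemma mk_mem (hε : ∀ i, ε i = 1 ∨ ε i = -1) (hδ : ∀ i, δ i = 1 ∨ δ i = -1)
    (g : Fin n × Fin n → ℝ)
    (hg : ∀ p : Fin n × Fin n, ε p.1 * δ p.1 ≠ ε p.2 * δ p.2 → g p = 0) :
    mk ε δ g ∈ pairAlgebra (Matrix.diagonal (Sum.elim ε δ))
      (Matrix.fromBlocks 0 (-1) 1 0 : Matrix (Fin n ⊕ Fin n) (Fin n ⊕ Fin n) ℝ) := by
  rw [mem_iff]
  refine ⟨?_, ?_, fun i j => rfl, fun i j => by simp [bF_symm]⟩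
  · intro x y
    rcases x with i | i <;> rcases y with j | j <;>
      simp only [mk_ll, mk_lr, mk_rl, mk_rr, Sum.elim_inl, Sum.elim_inr]
    · -- aF ε g j i * ε j + ε i * aF ε g i j = 0
      unfold aF
      rcases lt_trichotomy i j with h | h | h
      · rw [if_neg (asymm h), if_pos h, if_pos h]
        linear_combination (-(ε i * g (i, j))) * sq_one (hε j)
      · subst h; simp
      · rw [if_pos h, if_neg (asymm h), if_pos h]
        linear_combination (-(ε j * g (j, i))) * sq_one (hε i)
    · -- -(δ j * ε i * bF g j i) * δ j + ε i * bF g i j = 0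
      rw [bF_symm g j i]
      linear_combination (-(ε i * bF g i j)) * sq_one (hδ j)
    · -- bF g j i * ε j + δ i * -(δ i * ε j * bF g i j) = 0
      rw [bF_symm g j i]
      linear_combination (-(ε j * bF g i j)) * sq_one (hδ i)
    · -- -(aF ε g i j) * δ j + δ i * -(aF ε g j i) = 0
      by_cases hσ : ε i * δ i = ε j * δ j
      · unfold aF
        rcases lt_trichotomy i j with h | h | h
        · rw [if_pos h, if_neg (asymm h), if_pos h]
          rcases hε i with h1 | h1 <;> rcases hε j with h2 | h2 <;>
            rcases hδ i with h3 | h3 <;> rcases hδ j with h4 | h4 <;>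
            rw [h1, h2, h3, h4] at hσ ⊢ <;>
            first | ring1 | (exfalso; norm_num at hσ)
        · subst h; simp
        · rw [if_neg (asymm h), if_pos h, if_pos h]
          rcases hε i with h1 | h1 <;> rcases hε j with h2 | h2 <;>
            rcases hδ i with h3 | h3 <;> rcases hδ j with h4 | h4 <;>
            rw [h1, h2, h3, h4] at hσ ⊢ <;>
            first | ring1 | (exfalso; norm_num at hσ)
      · have z1 : g (i, j) = 0 := hg _ hσ
        have z2 : g (j, i) = 0 := hg _ fun h => hσ h.symm
        unfold aF
        split_ifs <;> simp [z1, z2]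
  · -- C2 : ∀ i j, -(δ j * ε i * bF g j i) = -(δ i * ε j * bF g i j)
    intro i j
    simp only [mk_rl]
    rw [bF_symm g j i]
    by_cases hσ : ε i * δ i = ε j * δ j
    · rcases hε i with h1 | h1 <;> rcases hε j with h2 | h2 <;>
        rcases hδ i with h3 | h3 <;> rcases hδ j with h4 | h4 <;>
        rw [h1, h2, h3, h4] at hσ ⊢ <;>
        first | ring1 | (exfalso; norm_num at hσ)
    · have z1 : g (i, j) = 0 := hg _ hσ
      have z2 : g (j, i) = 0 := hg _ fun h => hσ h.symm
      unfold bF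
      split_ifs <;> simp [z1, z2]

lemma ph_mk (g : Fin n × Fin n → ℝ) : ph (mk ε δ g) = g := by
  funext p
  rcases p with ⟨i, j⟩
  unfold ph
  by_cases h : i < j
  · rw [if_pos h]
    simp only [mk_ll]
    unfold aF
    rw [if_pos h]
  · rw [if_neg h]
    simp only [mk_lr]
    unfold bF
    rw [if_pos (not_lt.mp h)]

lemma ph_add (A B : Matrix (Fin n ⊕ Fin n) (Fin n ⊕ Fin n) ℝ) (p : Fin n × Fin n) :
    ph (A + B) p = ph A p + ph B p := by
  unfold ph; split <;> simp

lemma ph_smul (c : ℝ) (A : Matrix (Fin n ⊕ Fin n) (Fin n ⊕ Fin n) ℝ) (p : Fin n × Fin n) :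
    ph (c • A) p = c * ph A p := by
  unfold ph; split <;> simp

lemma mk_ph (hε : ∀ i, ε i = 1 ∨ ε i = -1) (hδ : ∀ i, δ i = 1 ∨ δ i = -1)
    (A : Matrix (Fin n ⊕ Fin n) (Fin n ⊕ Fin n) ℝ)
    (hA : A ∈ pairAlgebra (Matrix.diagonal (Sum.elim ε δ))
      (Matrix.fromBlocks 0 (-1) 1 0 : Matrix (Fin n ⊕ Fin n) (Fin n ⊕ Fin n) ℝ)) :
    mk ε δ (ph A) = A := by
  rw [mem_iff] at hA
  obtain ⟨C1, C2, C3, C4⟩ := hA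
  have ha : ∀ i j, aF ε (ph A) i j = A (inl i) (inl j) := by
    intro i j
    rcases lt_trichotomy i j with h | h | h
    · unfold aF ph
      rw [if_pos h]
      simp only
      rw [if_pos h]
    · subst h
      unfold aF
      rw [if_neg (lt_irrefl i), if_neg (lt_irrefl i)]
      have e := C1 (inl i) (inl i)
      simp only [Sum.elim_inl] at e
      rcases hε i with h1 | h1 <;> rw [h1] at e <;> linarith
    · unfold aF ph
      rw [if_neg (asymm h), if_pos h]
      simp only
      rw [if_pos h]
      have e := C1 (inl j) (inl i)
      simp only [Sum.elim_inl] at e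
      rcases hε i with h1 | h1 <;> rcases hε j with h2 | h2 <;> rw [h1, h2] at e ⊢ <;> linarith
  have hb : ∀ i j, bF (ph A) i j = A (inl i) (inr j) := by
    intro i j
    unfold bF ph
    by_cases h : j ≤ i
    · rw [if_pos h]
      simp only
      rw [if_neg (not_lt.mpr h)]
    · rw [if_neg h]
      simp only
      rw [if_neg (by push_neg at h; exact not_lt.mpr h.le)]
      exact C4 j i
  ext x y
  rcases x with i | i <;> rcases y with j | j
  · rw [mk_ll]; exact ha i j
  · rw [mk_lr]; exact hb i j
  · rw [mk_rl, hb]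
    have e := C1 (inl j) (inr i)
    simp only [Sum.elim_inl, Sum.elim_inr] at e
    rw [C4 j i] at e
    rcases hδ i with h1 | h1 <;> rcases hε j with h2 | h2 <;> rw [h1, h2] at e ⊢ <;> linarith
  · rw [mk_rr, ha, C3 i j]

lemma ph_supp (hε : ∀ i, ε i = 1 ∨ ε i = -1) (hδ : ∀ i, δ i = 1 ∨ δ i = -1)
    (A : Matrix (Fin n ⊕ Fin n) (Fin n ⊕ Fin n) ℝ)
    (hA : A ∈ pairAlgebra (Matrix.diagonal (Sum.elim ε δ))
      (Matrix.fromBlocks 0 (-1) 1 0 : Matrix (Fin n ⊕ Fin n) (Fin n ⊕ Fin n) ℝ))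
    (p : Fin n × Fin n) (hσ : ε p.1 * δ p.1 ≠ ε p.2 * δ p.2) : ph A p = 0 := by
  rw [mem_iff] at hA
  obtain ⟨C1, C2, C3, C4⟩ := hA
  rcases p with ⟨i, j⟩
  simp only at hσ
  unfold ph
  simp only
  by_cases h : i < j
  · rw [if_pos h]
    have e1 := C1 (inl j) (inl i)
    have e2 := C1 (inr j) (inr i)
    simp only [Sum.elim_inl, Sum.elim_inr] at e1 e2
    rw [C3 i j, C3 j i] at e2
    rcases hε i with h1 | h1 <;> rcases hε j with h2 | h2 <;>
      rcases hδ i with h3 | h3 <;> rcases hδ j with h4 | h4 <;>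
      rw [h1, h2] at e1 <;> rw [h3, h4] at e2 <;> rw [h1, h2, h3, h4] at hσ <;>
      first | linarith | (exfalso; norm_num at hσ)
  · rw [if_neg h]
    have e1 := C1 (inl i) (inr j)
    have e2 := C1 (inl j) (inr i)
    simp only [Sum.elim_inl, Sum.elim_inr] at e1 e2
    rw [← C2 i j, C4 j i] at e2
    rcases hε i with h1 | h1 <;> rcases hε j with h2 | h2 <;>
      rcases hδ i with h3 | h3 <;> rcases hδ j with h4 | h4 <;>
      rw [h1, h4] at e1 <;> rw [h2, h3] at e2 <;> rw [h1, h2, h3, h4] at hσ <;>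
      first | linarith | (exfalso; norm_num at hσ)

lemma aF_add (g₁ g₂ : Fin n × Fin n → ℝ) (i j : Fin n) :
    aF ε (g₁ + g₂) i j = aF ε g₁ i j + aF ε g₂ i j := by
  unfold aF; simp only [Pi.add_apply]; split_ifs <;> ring

lemma bF_add (g₁ g₂ : Fin n × Fin n → ℝ) (i j : Fin n) :
    bF (g₁ + g₂) i j = bF g₁ i j + bF g₂ i j := by
  unfold bF; simp only [Pi.add_apply]; split_ifs <;> ring

lemma aF_smul (c : ℝ) (g : Fin n × Fin n → ℝ) (i j : Fin n) :
    aF ε (c • g) i j = c * aF ε g i j := by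
  unfold aF; simp only [Pi.smul_apply, smul_eq_mul]; split_ifs <;> ring

lemma bF_smul (c : ℝ) (g : Fin n × Fin n → ℝ) (i j : Fin n) :
    bF (c • g) i j = c * bF g i j := by
  unfold bF; simp only [Pi.smul_apply, smul_eq_mul]; split_ifs <;> ring

lemma mk_add (g₁ g₂ : Fin n × Fin n → ℝ) :
    mk ε δ (g₁ + g₂) = mk ε δ g₁ + mk ε δ g₂ := by
  ext x y
  rcases x with i | i <;> rcases y with j | j <;>
    simp only [mk_ll, mk_lr, mk_rl, mk_rr, Matrix.add_apply, aF_add, bF_add] <;> ring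

lemma mk_smul (c : ℝ) (g : Fin n × Fin n → ℝ) :
    mk ε δ (c • g) = c • mk ε δ g := by
  ext x y
  rcases x with i | i <;> rcases y with j | j <;>
    simp only [mk_ll, mk_lr, mk_rl, mk_rr, Matrix.smul_apply, smul_eq_mul, aF_smul, bF_smul] <;>
    ring

end PairAux

open PairAux in
/-- For `D = diag(ε₁,…,εₙ,δ₁,…,δₙ)` with `εᵢ, δᵢ ∈ {−1,1}` and `Ω` the
standard symplectic matrix, the dimension of the Lie algebra of `O(D) ∩ Sp(Ω)` equals
`s² + t²`, where `s` is the number of indices with `εᵢ = δᵢ` and `t = n − s`. -/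
theorem finrank_pairAlgebra_diagonal_symplectic
    (n : ℕ) (hn : 1 ≤ n) (ε δ : Fin n → ℝ)
    (hε : ∀ i, ε i = 1 ∨ ε i = -1) (hδ : ∀ i, δ i = 1 ∨ δ i = -1)
    (D : Matrix (Fin n ⊕ Fin n) (Fin n ⊕ Fin n) ℝ)
    (hD : D = Matrix.diagonal (Sum.elim ε δ))
    (Ω : Matrix (Fin n ⊕ Fin n) (Fin n ⊕ Fin n) ℝ)
    (hΩ : Ω = Matrix.fromBlocks 0 (-1) 1 0)
    (s : ℕ) (hs : s = Nat.card {i : Fin n // ε i = δ i}) :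
    Module.finrank ℝ (pairAlgebra D Ω) = s ^ 2 + (n - s) ^ 2 := by
  classical
  subst hD hΩ
  set S := {p : Fin n × Fin n // ε p.1 * δ p.1 = ε p.2 * δ p.2} with hS
  let ext : (S → ℝ) → (Fin n × Fin n → ℝ) := fun f p =>
    if h : ε p.1 * δ p.1 = ε p.2 * δ p.2 then f ⟨p, h⟩ else 0
  have extsupp : ∀ f (p : Fin n × Fin n), ε p.1 * δ p.1 ≠ ε p.2 * δ p.2 → ext f p = 0 :=
    fun f p hp => dif_neg hp
  let E : (pairAlgebra (Matrix.diagonal (Sum.elim ε δ))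
      (Matrix.fromBlocks 0 (-1) 1 0 : Matrix (Fin n ⊕ Fin n) (Fin n ⊕ Fin n) ℝ)) ≃ (S → ℝ) := {
    toFun := fun A q => ph (A : Matrix (Fin n ⊕ Fin n) (Fin n ⊕ Fin n) ℝ) q.1
    invFun := fun f => ⟨mk ε δ (ext f), mk_mem ε δ hε hδ _ (extsupp f)⟩
    left_inv := fun A => by
      apply Subtype.ext
      have hfun : ext (fun q => ph (A : Matrix (Fin n ⊕ Fin n) (Fin n ⊕ Fin n) ℝ) q.1)
          = ph (A : Matrix (Fin n ⊕ Fin n) (Fin n ⊕ Fin n) ℝ) := by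
        funext p
        by_cases h : ε p.1 * δ p.1 = ε p.2 * δ p.2
        · exact dif_pos h
        · rw [show ext (fun q => ph (A : Matrix (Fin n ⊕ Fin n) (Fin n ⊕ Fin n) ℝ) q.1) p = 0
            from dif_neg h, ph_supp ε δ hε hδ _ A.2 p h]
      show mk ε δ _ = _
      rw [hfun]
      exact mk_ph ε δ hε hδ _ A.2
    right_inv := fun f => by
      funext q
      show ph (mk ε δ (ext f)) q.1 = f q
      rw [ph_mk]
      exact dif_pos q.2 }
  have hlin : IsLinearMap ℝ E := by
    constructor
    · intro A B
      funext q
      show ph ((A + B : _) : Matrix (Fin n ⊕ Fin n) (Fin n ⊕ Fin n) ℝ) q.1 = _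
      rw [Submodule.coe_add, ph_add]
      rfl
    · intro c A
      funext q
      show ph ((c • A : _) : Matrix (Fin n ⊕ Fin n) (Fin n ⊕ Fin n) ℝ) q.1 = _
      rw [Submodule.coe_smul, ph_smul]
      rfl
  have hfr := LinearEquiv.finrank_eq (E.toLinearEquiv hlin)
  rw [hfr, Module.finrank_pi]
  -- now count
  set P : Finset (Fin n) := Finset.univ.filter (fun i => ε i = δ i) with hP
  have hsP : s = P.card := by
    rw [hs, Nat.card_eq_fintype_card, Fintype.card_subtype]
  have key : ∀ i j : Fin n, (ε i * δ i = ε j * δ j) ↔ ((ε i = δ i) ↔ (ε j = δ j)) := by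
    intro i j
    rcases hε i with h1 | h1 <;> rcases hε j with h2 | h2 <;>
      rcases hδ i with h3 | h3 <;> rcases hδ j with h4 | h4 <;>
      rw [h1, h2, h3, h4] <;> norm_num
  have hfil : (Finset.univ.filter
      (fun p : Fin n × Fin n => ε p.1 * δ p.1 = ε p.2 * δ p.2)) = P ×ˢ P ∪ Pᶜ ×ˢ Pᶜ := by
    ext p
    simp only [Finset.mem_filter, Finset.mem_univ, true_and, Finset.mem_union,
      Finset.mem_product, Finset.mem_compl, hP]
    rw [key p.1 p.2]
    tauto
  have hdisj : Disjoint (P ×ˢ P) (Pᶜ ×ˢ Pᶜ) := by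
    rw [Finset.disjoint_left]
    rintro ⟨i, j⟩ hp hp'
    rw [Finset.mem_product] at hp hp'
    exact (Finset.mem_compl.mp hp'.1) hp.1
  rw [Fintype.card_subtype, hfil, Finset.card_union_of_disjoint hdisj,
    Finset.card_product, Finset.card_product, Finset.card_compl, Fintype.card_fin, ← hsP,
    pow_two, pow_two]
end

section
/- Fix n ≥ 1, signs t_1,…,t_n, s_1,…,s_n ∈ {−1, 1}, and let D = diag(t_1,…,t_n, s_1,…,s_n) ∈ M_{2n}(ℝ). Let σ be a 2n×2n real matrix satisfying σ Ω σᵀ = Ω and σᵀ D σ = D, where Ω is the standard symplectic matrix. For p ∈ ℝ^{2n+1} and u ∈ ℝ^{2n} set V(p, u) = Σ_{i=1}^{n} ( u_i X_i(p) + u_{n+i} Y_i(p) ) ∈ ℝ^{2n+1}. Then for every p ∈ ℝ^{2n+1} and all u, u' ∈ ℝ^{2n}: L_σ(V(p, u)) = V(f_σ(p), σu), and (σu)ᵀ D (σu') = uᵀ D u'. Consequently f_σ maps the subspace H_p spanned by X_1(p),…,Y_n(p) onto H_{f_σ(p)} and preserves the pseudo-Riemannian inner product on these subspaces in which the frame (X_1,…,X_n,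 Y_1,…,Y_n) is orthonormal with g(X_i, X_i) = t_i and g(Y_i, Y_i) = s_i; that is, f_σ is an isometry of the left-invariant contact sub-pseudo-Riemannian structure on the Heisenberg group. -/
open Matrix

/-- The Heisenberg group `ℝ^{2n+1}`, identified with `ℝⁿ × ℝⁿ × ℝ`; points `(x, y, z)`. -/
abbrev Heis (n : ℕ) : Type := (Fin n → ℝ) × (Fin n → ℝ) × ℝ

/-- The left-invariant vector field `X_i(x,y,z) = (e_i, 0, y_i/2)` on the Heisenberg group. -/
noncomputable def XH {n : ℕ} (i : Fin n) (p : Heis n) : Heis n :=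
  (Pi.single i 1, 0, p.2.1 i / 2)

/-- The left-invariant vector field `Y_i(x,y,z) = (0, e_i, −x_i/2)` on the Heisenberg group. -/
noncomputable def YH {n : ℕ} (i : Fin n) (p : Heis n) : Heis n :=
  (0, Pi.single i 1, -(p.1 i) / 2)

/-- The map `f_σ(x, y, z) = (σ(x,y), z)`. -/
noncomputable def fSigma {n : ℕ} (σ : Matrix (Fin n ⊕ Fin n) (Fin n ⊕ Fin n) ℝ)
    (p : Heis n) : Heis n :=
  (fun i => σ.mulVec (Sum.elim p.1 p.2.1) (Sum.inl i),
   fun i => σ.mulVec (Sum.elim p.1 p.2.1) (Sum.inr i),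
   p.2.2)

/-- The differential of `f_σ` (at every point): the linear map
`(v_x, v_y, v_z) ↦ (σ(v_x, v_y), v_z)`. -/
noncomputable def LSigma {n : ℕ} (σ : Matrix (Fin n ⊕ Fin n) (Fin n ⊕ Fin n) ℝ) :
    Heis n →ₗ[ℝ] Heis n where
  toFun v :=
    (fun i => σ.mulVec (Sum.elim v.1 v.2.1) (Sum.inl i),
     fun i => σ.mulVec (Sum.elim v.1 v.2.1) (Sum.inr i),
     v.2.2)
  map_add' v w := by
    have h : Sum.elim (v + w).1 (v + w).2.1
        = Sum.elim v.1 v.2.1 + Sum.elim w.1 w.2.1 := by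
      funext s; cases s <;> rfl
    simp only [h, Matrix.mulVec_add]
    rfl
  map_smul' c v := by
    have h : Sum.elim (c • v).1 (c • v).2.1 = c • Sum.elim v.1 v.2.1 := by
      funext s; cases s <;> rfl
    simp only [h, Matrix.mulVec_smul]
    rfl

/-- The horizontal vector `V(p, u) = Σᵢ (uᵢ Xᵢ(p) + u_{n+i} Yᵢ(p))`. -/
noncomputable def VH {n : ℕ} (p : Heis n) (u : Fin n ⊕ Fin n → ℝ) : Heis n :=
  (∑ i, u (Sum.inl i) • XH i p) + (∑ i, u (Sum.inr i) • YH i p)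


section Aux
variable {n : ℕ}

lemma VH_eq (p : Heis n) (u : Fin n ⊕ Fin n → ℝ) :
    VH p u = (fun j => u (Sum.inl j), fun j => u (Sum.inr j),
      -(u ⬝ᵥ (Matrix.fromBlocks 0 (-1) 1 0 :
        Matrix (Fin n ⊕ Fin n) (Fin n ⊕ Fin n) ℝ).mulVec (Sum.elim p.1 p.2.1)) / 2) := by
  obtain ⟨x, y, z⟩ := p
  refine Prod.ext ?_ (Prod.ext ?_ ?_)
  · simp only [VH, XH, YH, Prod.fst_sum, Prod.fst_add, smul_zero, Finset.sum_const_zero,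
      add_zero, Prod.smul_fst]
    funext j
    simp [Finset.sum_apply, Pi.single_apply, mul_ite, Finset.sum_ite_eq']
  · simp only [VH, XH, YH, Prod.snd_sum, Prod.snd_add, Prod.fst_sum, Prod.fst_add,
      Prod.smul_snd, Prod.smul_fst, smul_zero, Finset.sum_const_zero, zero_add]
    funext j
    simp [Finset.sum_apply, Pi.single_apply, mul_ite, Finset.sum_ite_eq']
  · simp only [VH, XH, YH, Prod.snd_sum, Prod.snd_add, Prod.smul_snd, smul_eq_mul,
      Matrix.fromBlocks_mulVec, Matrix.zero_mulVec, Matrix.neg_mulVec, Matrix.one_mulVec,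
      dotProduct, Fintype.sum_sum_type, Sum.elim_inl, Sum.elim_inr,
      zero_add, add_zero, Pi.neg_apply]
    simp only [Function.comp, Sum.elim_inl, Sum.elim_inr, mul_neg, neg_neg, Finset.sum_neg_distrib]
    have h1 : ∑ i, u (Sum.inl i) * (y i / 2) = (∑ i, u (Sum.inl i) * y i) / 2 := by
      rw [Finset.sum_div]; exact Finset.sum_congr rfl fun i _ => by ring
    have h2 : ∑ i, u (Sum.inr i) * (-x i / 2) = -((∑ i, u (Sum.inr i) * x i) / 2) := by
      rw [Finset.sum_div, ← Finset.sum_neg_distrib]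
      exact Finset.sum_congr rfl fun i _ => by ring
    rw [h1, h2]
    ring

end Aux

lemma dot_conj (A B : Matrix (Fin n ⊕ Fin n) (Fin n ⊕ Fin n) ℝ) (u w : Fin n ⊕ Fin n → ℝ) :
    (A.mulVec u) ⬝ᵥ B.mulVec (A.mulVec w) = u ⬝ᵥ (Aᵀ * B * A).mulVec w := by
  rw [Matrix.mulVec_mulVec, Matrix.dotProduct_mulVec, ← Matrix.vecMul_transpose,
    Matrix.vecMul_vecMul, ← Matrix.dotProduct_mulVec, mul_assoc]

lemma omega_sq : (Matrix.fromBlocks 0 (-1) 1 0 : Matrix (Fin n ⊕ Fin n) (Fin n ⊕ Fin n) ℝ) *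
    Matrix.fromBlocks 0 (-1) 1 0 = -1 := by
  rw [Matrix.fromBlocks_multiply]
  simp [← Matrix.fromBlocks_one, Matrix.fromBlocks_neg]

lemma elim_fSigma (σ : Matrix (Fin n ⊕ Fin n) (Fin n ⊕ Fin n) ℝ) (p : Heis n) :
    Sum.elim (fSigma σ p).1 (fSigma σ p).2.1 = σ.mulVec (Sum.elim p.1 p.2.1) :=
  funext fun k => by cases k <;> rfl

noncomputable def VHlin (p : Heis n) : (Fin n ⊕ Fin n → ℝ) →ₗ[ℝ] Heis n where
  toFun u := VH p u
  map_add' u v := by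
    simp only [VH, Pi.add_apply, add_smul, Finset.sum_add_distrib]
    abel
  map_smul' c u := by
    simp only [VH, Pi.smul_apply, smul_eq_mul, ← smul_smul, ← Finset.smul_sum, smul_add,
      RingHom.id_apply]

lemma VH_single_inl (p : Heis n) (j : Fin n) :
    VH p (Pi.single (Sum.inl j) 1) = XH j p := by
  simp [VH, Pi.single_apply, ite_smul, Finset.sum_ite_eq']

lemma VH_single_inr (p : Heis n) (j : Fin n) :
    VH p (Pi.single (Sum.inr j) 1) = YH j p := by
  simp [VH, Pi.single_apply, ite_smul, Finset.sum_ite_eq']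

lemma span_range_eq (p : Heis n) :
    Submodule.span ℝ
      (Set.range (Sum.elim (fun j : Fin n => XH j p) (fun j : Fin n => YH j p))) =
    LinearMap.range (VHlin p) := by
  apply le_antisymm
  · rw [Submodule.span_le]
    rintro _ ⟨k, rfl⟩
    cases k with
    | inl j => exact ⟨Pi.single (Sum.inl j) 1, VH_single_inl p j⟩
    | inr j => exact ⟨Pi.single (Sum.inr j) 1, VH_single_inr p j⟩
  · rintro _ ⟨u, rfl⟩
    show VH p u ∈ _
    unfold VH
    apply Submodule.add_mem <;> refine Submodule.sum_mem _ fun i _ => Submodule.smul_mem _ _ ?_ <;>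
      apply Submodule.subset_span
    · exact ⟨Sum.inl i, rfl⟩
    · exact ⟨Sum.inr i, rfl⟩


/-- If `σ` is symplectic (`σ Ω σᵀ = Ω`) and orthogonal for the
diagonal sign matrix `D` (`σᵀ D σ = D`), then the differential of `f_σ` maps
`V(p, u)` to `V(f_σ(p), σu)` and preserves the pseudo-Euclidean product given by `D`;
consequently `f_σ` maps `H_p = span(X₁(p),…,Yₙ(p))` onto `H_{f_σ(p)}` isometrically:
`f_σ` is an isometry of the left-invariant contact sub-pseudo-Riemannian structure. -/
theorem fSigma_isometry_heisenberg
    (n : ℕ) (hn : 1 ≤ n) (t s : Fin n → ℝ)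
    (ht : ∀ i, t i = 1 ∨ t i = -1) (hs : ∀ i, s i = 1 ∨ s i = -1)
    (D : Matrix (Fin n ⊕ Fin n) (Fin n ⊕ Fin n) ℝ)
    (hD : D = Matrix.diagonal (Sum.elim t s))
    (σ : Matrix (Fin n ⊕ Fin n) (Fin n ⊕ Fin n) ℝ)
    (hσΩ : σ * Matrix.fromBlocks 0 (-1) 1 0 * σᵀ = Matrix.fromBlocks 0 (-1) 1 0)
    (hσD : σᵀ * D * σ = D)
    (p : Heis n) (u u' : Fin n ⊕ Fin n → ℝ) :
    LSigma σ (VH p u) = VH (fSigma σ p) (σ.mulVec u) ∧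
    (σ.mulVec u) ⬝ᵥ D.mulVec (σ.mulVec u') = u ⬝ᵥ D.mulVec u' ∧
    Submodule.map (LSigma σ)
        (Submodule.span ℝ
          (Set.range (Sum.elim (fun j : Fin n => XH j p) (fun j : Fin n => YH j p)))) =
      Submodule.span ℝ
        (Set.range (Sum.elim (fun j : Fin n => XH j (fSigma σ p))
          (fun j : Fin n => YH j (fSigma σ p)))) := by
  set Ω : Matrix (Fin n ⊕ Fin n) (Fin n ⊕ Fin n) ℝ := Matrix.fromBlocks 0 (-1) 1 0 with hΩdef
  have hΩ2 : Ω * Ω = -1 := omega_sq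
  have hστ : σ * (Ω * σᵀ * -Ω) = 1 := by
    have h : (σ * Ω * σᵀ) * -Ω = Ω * -Ω := by rw [hσΩ]
    rw [mul_neg, mul_neg, hΩ2, neg_neg] at h
    calc σ * (Ω * σᵀ * -Ω) = σ * Ω * σᵀ * -Ω := by simp only [mul_assoc]
      _ = 1 := by rw [mul_neg]; exact h
  have hτσ : (Ω * σᵀ * -Ω) * σ = 1 := mul_eq_one_comm.mp hστ
  have hnΩ : (-Ω) * Ω = 1 := by rw [neg_mul, hΩ2, neg_neg]
  have h1 : σᵀ * -Ω * σ = -Ω := by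
    calc σᵀ * -Ω * σ = ((-Ω) * Ω) * (σᵀ * -Ω * σ) := by rw [hnΩ, one_mul]
      _ = -Ω * ((Ω * σᵀ * -Ω) * σ) := by simp only [mul_assoc]
      _ = -Ω * 1 := by rw [hτσ]
      _ = -Ω := mul_one _
  have hσΩ' : σᵀ * Ω * σ = Ω := by
    rw [mul_neg, neg_mul] at h1
    exact neg_injective h1
  have key : ∀ v : Fin n ⊕ Fin n → ℝ,
      LSigma σ (VH p v) = VH (fSigma σ p) (σ.mulVec v) := by
    intro v
    rw [VH_eq, VH_eq]
    have hu : Sum.elim (fun j => v (Sum.inl j)) (fun j => v (Sum.inr j)) = v :=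
      funext fun k => by cases k <;> rfl
    simp only [LSigma, LinearMap.coe_mk, AddHom.coe_mk]
    refine Prod.ext ?_ (Prod.ext ?_ ?_)
    · show (fun i => σ.mulVec (Sum.elim _ _) (Sum.inl i)) = _
      rw [hu]
    · show (fun i => σ.mulVec (Sum.elim _ _) (Sum.inr i)) = _
      rw [hu]
    · show -(v ⬝ᵥ Ω.mulVec (Sum.elim p.1 p.2.1)) / 2 = _
      rw [elim_fSigma σ p, dot_conj, hσΩ']
  refine ⟨key u, ?_, ?_⟩
  · rw [dot_conj, hσD]
  · rw [span_range_eq, span_range_eq, ← LinearMap.range_comp]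
    have hcomp : (LSigma σ).comp (VHlin p) = (VHlin (fSigma σ p)).comp σ.mulVecLin :=
      LinearMap.ext fun v => by
        simp only [LinearMap.comp_apply, Matrix.mulVecLin_apply]
        exact key v
    have hsurj : LinearMap.range (Matrix.mulVecLin σ) = ⊤ := by
      rw [LinearMap.range_eq_top]
      intro w0
      exact ⟨(Ω * σᵀ * -Ω).mulVec w0, by
        rw [Matrix.mulVecLin_apply, Matrix.mulVec_mulVec, hστ, Matrix.one_mulVec]⟩
    rw [hcomp, LinearMap.range_comp, hsurj, Submodule.map_top]
end

section
/- Let V be a finite-dimensional real vector space, B a nondegenerate symmetric bilinear form on V, and J an endomorphism of V that is skew-adjoint with respect to B, i.e. B(J(v), w) + B(v, J(w)) = 0 for all v, w ∈ V. Then for any real numbers λ, μ with λ + μ ≠ 0, B(v, w) = 0 whenever v lies in the generalized eigenspace of J for the eigenvalue λ and w lies in the generalized eigenspace of J for the eigenvalue μ. In particular, B vanishes identically on the generalized eigenspace of J for any nonzero real eigenvalue λ. -/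
/-- If `J` is skew-adjoint with respect to a nondegenerate symmetric
bilinear form `B` on a finite-dimensional real vector space, then the generalized
eigenspaces for real eigenvalues `λ`, `μ` with `λ + μ ≠ 0` are `B`-orthogonal; in
particular `B` vanishes identically on the generalized eigenspace of any nonzero real
eigenvalue. -/
theorem skew_adjoint_genEigenspaces_orthogonal
    (V : Type*) [AddCommGroup V] [Module ℝ V] [FiniteDimensional ℝ V]
    (B : V →ₗ[ℝ] V →ₗ[ℝ] ℝ)
    (hB_symm : ∀ v w : V, B v w = B w v)
    (hB_nondeg : ∀ v : V, (∀ w : V, B v w = 0) → v = 0)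
    (J : Module.End ℝ V)
    (hJ_skew : ∀ v w : V, B (J v) w + B v (J w) = 0) :
    (∀ lam mu : ℝ, lam + mu ≠ 0 →
      ∀ v ∈ J.maxGenEigenspace lam, ∀ w ∈ J.maxGenEigenspace mu, B v w = 0) ∧
    (∀ lam : ℝ, lam ≠ 0 →
      ∀ v ∈ J.maxGenEigenspace lam, ∀ w ∈ J.maxGenEigenspace lam, B v w = 0) := by
  have main : ∀ lam mu : ℝ, lam + mu ≠ 0 →
      ∀ v ∈ J.maxGenEigenspace lam, ∀ w ∈ J.maxGenEigenspace mu, B v w = 0 := by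
    intro lam mu hlm v hv w hw
    rw [Module.End.mem_maxGenEigenspace] at hv hw
    obtain ⟨k, hk⟩ := hv
    obtain ⟨l, hl⟩ := hw
    have key : ∀ n k l : ℕ, k + l ≤ n → ∀ v w : V,
        ((J - lam • (1 : Module.End ℝ V)) ^ k) v = 0 →
        ((J - mu • (1 : Module.End ℝ V)) ^ l) w = 0 → B v w = 0 := by
      intro n
      induction n with
      | zero =>
        intro k l hkl v w hv hw
        have hk0 : k = 0 := by omega
        have hl0 : l = 0 := by omega
        subst hk0; subst hl0
        simp only [pow_zero, Module.End.one_apply] at hv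
        subst hv; simp
      | succ n ih =>
        intro k l hkl v w hv hw
        match k, l with
        | 0, l =>
          simp only [pow_zero, Module.End.one_apply] at hv
          subst hv; simp
        | k+1, 0 =>
          simp only [pow_zero, Module.End.one_apply] at hw
          subst hw; simp
        | k+1, l+1 =>
          -- set v' := (J - lam) v, w' := (J - mu) w
          have hv' : ((J - lam • (1 : Module.End ℝ V)) ^ k)
              ((J - lam • (1 : Module.End ℝ V)) v) = 0 := by
            rw [← Module.End.mul_apply, ← pow_succ]; exact hv
          have hw' : ((J - mu • (1 : Module.End ℝ V)) ^ l)
              ((J - mu • (1 : Module.End ℝ V)) w) = 0 := by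
            rw [← Module.End.mul_apply, ← pow_succ]; exact hw
          have h1 : B ((J - lam • (1 : Module.End ℝ V)) v) w = 0 :=
            ih k (l+1) (by omega) _ _ hv' hw
          have h2 : B v ((J - mu • (1 : Module.End ℝ V)) w) = 0 :=
            ih (k+1) l (by omega) _ _ hv hw'
          have hexp : B ((J - lam • (1 : Module.End ℝ V)) v) w
              + B v ((J - mu • (1 : Module.End ℝ V)) w)
              = - (lam + mu) * B v w := by
            have hs := hJ_skew v w
            simp only [LinearMap.sub_apply, LinearMap.smul_apply, Module.End.one_apply,
              map_sub, map_smul, LinearMap.smul_apply, smul_eq_mul]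
            linarith
          rw [h1, h2] at hexp
          have : (lam + mu) * B v w = 0 := by linarith
          rcases mul_eq_zero.mp this with h | h
          · exact absurd h hlm
          · exact h
    exact key (k + l) k l le_rfl v w hk hl
  refine ⟨main, fun lam hlam v hv w hw => main lam lam (by
    intro h; apply hlam; linarith) v hv w hw⟩
end

section
/- Let V be a real vector space of dimension 2n, g a nondegenerate symmetric bilinear form on V, and ω a nondegenerate alternating bilinear form on V, and let J be the unique endomorphism of V satisfying ω(v, w) = g(J(v), w) for all v, w ∈ V. Suppose there exists a basis e_1, …, e_{2n} of V that is simultaneously orthonormal for g (g(e_i, e_j) = 0 for i ≠ j and g(e_i, e_i) ∈ {−1, 1} for all i) and symplectic for ω (ω(e_i, e_{n+j}) = δ_{ij} and ω(e_i, e_j) = ω(e_{n+i}, e_{n+j}) = 0 for all 1 ≤ i, j ≤ n). Then J⁴ = id_V; in particular every complex eigenvalue of J lies in {i, −i, 1, −1}. -/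
/-- Let `g` be a nondegenerate symmetric bilinear form and `ω` a
nondegenerate alternating bilinear form on a real vector space of dimension `2n`, and
let `J` be the endomorphism determined by `ω(v, w) = g(J(v), w)`. If there is a basis
`e` that is simultaneously orthonormal for `g` and symplectic for `ω`, then `J⁴ = id`. -/
theorem compatible_structure_J_pow_four
    (n : ℕ) (V : Type*) [AddCommGroup V] [Module ℝ V]
    (g ω : V →ₗ[ℝ] V →ₗ[ℝ] ℝ)
    (hg_symm : ∀ v w : V, g v w = g w v)
    (hg_nondeg : ∀ v : V, (∀ w : V, g v w = 0) → v = 0)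
    (hω_alt : ∀ v : V, ω v v = 0)
    (hω_nondeg : ∀ v : V, (∀ w : V, ω v w = 0) → v = 0)
    (J : Module.End ℝ V)
    (hJ : ∀ v w : V, ω v w = g (J v) w)
    (e : Module.Basis (Fin n ⊕ Fin n) ℝ V)
    (h_orth : ∀ i j, i ≠ j → g (e i) (e j) = 0)
    (h_unit : ∀ i, g (e i) (e i) = 1 ∨ g (e i) (e i) = -1)
    (h_sympl₁ : ∀ i j : Fin n,
      ω (e (Sum.inl i)) (e (Sum.inr j)) = if i = j then 1 else 0)
    (h_sympl₂ : ∀ i j : Fin n, ω (e (Sum.inl i)) (e (Sum.inl j)) = 0)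
    (h_sympl₃ : ∀ i j : Fin n, ω (e (Sum.inr i)) (e (Sum.inr j)) = 0) :
    J ^ 4 = 1 := by
  -- skew-symmetry of ω
  have hskew : ∀ v w : V, ω w v = -ω v w := by
    intro v w
    have h := hω_alt (v + w)
    simp only [map_add, LinearMap.add_apply, hω_alt v, hω_alt w] at h
    linarith
  -- equality test via g against basis
  have key : ∀ v w : V, (∀ j, g v (e j) = g w (e j)) → v = w := by
    intro v w h
    have h0 : g (v - w) = 0 := by
      apply e.ext
      intro j
      simp [map_sub, h j]
    have : v - w = 0 := hg_nondeg _ (fun u => by rw [h0]; rfl)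
    exact sub_eq_zero.mp this
  have hsq : ∀ i : Fin n ⊕ Fin n, g (e i) (e i) * g (e i) (e i) = 1 := by
    intro i; rcases h_unit i with h | h <;> rw [h] <;> norm_num
  -- action of J on the basis
  have hJ1 : ∀ i : Fin n,
      J (e (Sum.inl i)) = g (e (Sum.inr i)) (e (Sum.inr i)) • e (Sum.inr i) := by
    intro i
    apply key
    intro j
    rw [← hJ]
    simp only [map_smul, LinearMap.smul_apply, smul_eq_mul]
    rcases j with j | j
    · rw [h_sympl₂, h_orth (Sum.inr i) (Sum.inl j) (by simp), mul_zero]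
    · rw [h_sympl₁]
      by_cases h : i = j
      · subst h; simp [hsq]
      · rw [if_neg h, h_orth (Sum.inr i) (Sum.inr j) (by simp [h]), mul_zero]
  have hJ2 : ∀ i : Fin n,
      J (e (Sum.inr i)) = (-(g (e (Sum.inl i)) (e (Sum.inl i)))) • e (Sum.inl i) := by
    intro i
    apply key
    intro j
    rw [← hJ]
    simp only [map_smul, LinearMap.smul_apply, smul_eq_mul]
    rcases j with j | j
    · rw [hskew, h_sympl₁]
      by_cases h : i = j
      · subst h; rw [if_pos rfl]; nlinarith [hsq (Sum.inl i)]
      · rw [if_neg fun hh => h hh.symm, h_orth (Sum.inl i) (Sum.inl j) (by simp [h])]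
        ring
    · rw [h_sympl₃, h_orth (Sum.inl i) (Sum.inr j) (by simp)]
      ring
  have smul_one : ∀ (a : ℝ) (x : V), a = 1 → a • x = x := by
    intro a x h; rw [h, one_smul]
  apply e.ext
  intro k
  have hpow : ∀ v : V, (J ^ 4) v = J (J (J (J v))) := by
    intro v
    simp [pow_succ, Module.End.mul_apply]
  rcases k with i | i
  · rw [show (1 : Module.End ℝ V) (e (Sum.inl i)) = e (Sum.inl i) from rfl, hpow]
    simp only [hJ1, hJ2, map_smul, smul_smul]
    exact smul_one _ _ (by nlinarith [hsq (Sum.inl i), hsq (Sum.inr i)])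
  · rw [show (1 : Module.End ℝ V) (e (Sum.inr i)) = e (Sum.inr i) from rfl, hpow]
    simp only [hJ1, hJ2, map_smul, smul_smul]
    exact smul_one _ _ (by nlinarith [hsq (Sum.inl i), hsq (Sum.inr i)])
end
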